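/- For every R ≥ 0 the set B*_R is reflexive: if T ∈ B(H) is such that for all orthogonal projections P, Q lying in the von Neumann algebra A'' generated by A one has (P S Q = 0 for every S ∈ B*_R) ⟹ P T Q = 0, then T ∈ B*_R. -/

import Mathlib

open scoped ENNReal NNReal

noncomputable section SpectralProjections

variable {H : Type*} [NormedAddCommGroup H] [InnerProductSpace ℂ H] [CompleteSpace H]

/-- The closed subspace of vectors whose spectral measure (for the self-adjoint operator `a`)
is supported in the closed set `S`: the vectors killed by `g(a)` for every continuous
`g : ℝ → ℝ` vanishing on `S`.  (Applied below only to closed sets `S`, for which this is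
precisely the range of the spectral projection `χ_S(a)`.) -/
def spectralSubspace (a : H →L[ℂ] H) (S : Set ℝ) : Submodule ℂ H :=
  (⨅ g : {g : ℝ → ℝ // Continuous g ∧ ∀ x ∈ S, g x = 0},
    LinearMap.ker ((cfc (g : ℝ → ℝ) a : H →L[ℂ] H) : H →ₗ[ℂ] H)).topologicalClosure

instance (a : H →L[ℂ] H) (S : Set ℝ) : CompleteSpace (spectralSubspace a S) :=
  (Submodule.isClosed_topologicalClosure _).completeSpace_coe

/-- The spectral projection `χ_{(-∞, r]}(a)` of a (self-adjoint) bounded operator `a`,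
realized as the orthogonal projection onto the corresponding spectral subspace. -/
def specProjIic (a : H →L[ℂ] H) (r : ℝ) : H →L[ℂ] H :=
  (spectralSubspace a (Set.Iic r)).subtypeL ∘L (spectralSubspace a (Set.Iic r)).orthogonalProjectionOnto

/-- The spectral projection `χ_{[r, ∞)}(a)`. -/
def specProjIci (a : H →L[ℂ] H) (r : ℝ) : H →L[ℂ] H :=
  (spectralSubspace a (Set.Ici r)).subtypeL ∘L (spectralSubspace a (Set.Ici r)).orthogonalProjectionOnto

/-- The spectral projection `χ_{(r, ∞)}(a)`. -/
def specProjIoi (a : H →L[ℂ] H) (r : ℝ) : H →L[ℂ] H := 1 - specProjIic a r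

/-- The spectral projection `χ_{(-∞, r)}(a)`. -/
def specProjIio (a : H →L[ℂ] H) (r : ℝ) : H →L[ℂ] H := 1 - specProjIci a r

variable (dom : Set (H →L[ℂ] H)) (L : (H →L[ℂ] H) → ℝ)

/-- `T` has spectral propagation at most `R` (with respect to the Lipschitz data `(dom, L)`):
`χ_{(-∞,0]}(a) T χ_{(R,∞)}(a) = 0` for every self-adjoint `a ∈ dom` with `L a ≤ 1`. -/
def HasSpecPropLE (T : H →L[ℂ] H) (R : ℝ) : Prop :=
  ∀ a ∈ dom, IsSelfAdjoint a → L a ≤ 1 →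
    specProjIic a 0 * T * specProjIoi a R = 0

/-- The spectral propagation of `T`, an extended nonnegative real
(`∞` if `T` has no finite propagation bound). -/
def specPropagation (T : H →L[ℂ] H) : ℝ≥0∞ :=
  ⨅ (R : ℝ≥0) (_ : HasSpecPropLE dom L T R), (R : ℝ≥0∞)

end SpectralProjections

variable {H : Type*} [NormedAddCommGroup H] [InnerProductSpace ℂ H] [CompleteSpace H]

/-- The commutant of a set of bounded operators. -/
def setCommutant (S : Set (H →L[ℂ] H)) : Set (H →L[ℂ] H) :=
  {T | ∀ s ∈ S, s * T = T * s}

section AuxLemmas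

open Polynomial in
/-- If `b` commutes with the selfadjoint operator `a`, then `b` commutes with `cfcHom ha f`. -/
lemma commute_cfcHom_of_commute {a b : H →L[ℂ] H} (ha : IsSelfAdjoint a)
    (hb : Commute b a) (f : C(spectrum ℝ a, ℝ)) : Commute b (cfcHom ha f) := by
  let K : Subalgebra ℝ C(spectrum ℝ a, ℝ) :=
    (Subalgebra.centralizer ℝ {b}).comap (cfcHom ha).toAlgHom
  have hKc : IsClosed (K : Set C(spectrum ℝ a, ℝ)) := by
    have : (K : Set C(spectrum ℝ a, ℝ)) = {g | b * cfcHom ha g = cfcHom ha g * b} := by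
      ext g
      simp [K, Subalgebra.mem_comap, Subalgebra.mem_centralizer_iff, Set.mem_centralizer_iff]
    rw [this]
    exact isClosed_eq (continuous_const.mul (cfcHom_continuous ha))
      ((cfcHom_continuous ha).mul continuous_const)
  have hX : polynomialFunctions (spectrum ℝ a) ≤ K := by
    rw [polynomialFunctions.eq_adjoin_X]
    rw [Algebra.adjoin_le_iff]
    rintro _ rfl
    show toContinuousMapOnAlgHom (spectrum ℝ a) X ∈ K
    have hid : cfcHom ha (toContinuousMapOnAlgHom (spectrum ℝ a) X) = a := by
      rw [show toContinuousMapOnAlgHom (spectrum ℝ a) X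
          = (ContinuousMap.id ℝ).restrict (spectrum ℝ a) from ContinuousMap.ext fun x => by simp]
      exact cfcHom_id ha
    simp only [K, Subalgebra.mem_comap, Subalgebra.mem_centralizer_iff]
    rintro y rfl
    show y * cfcHom ha ((toContinuousMapOnAlgHom (spectrum ℝ a)) X)
        = cfcHom ha ((toContinuousMapOnAlgHom (spectrum ℝ a)) X) * y
    rw [hid]
    exact hb.eq
  have htop : (⊤ : Subalgebra ℝ C(spectrum ℝ a, ℝ)) ≤ K := by
    rw [← polynomialFunctions.topologicalClosure (spectrum ℝ a)]
    exact Subalgebra.topologicalClosure_minimal hX hKc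
  have hf : f ∈ K := htop (Algebra.mem_top)
  rw [Subalgebra.mem_comap, Subalgebra.mem_centralizer_iff] at hf
  exact hf b rfl

/-- If `b` commutes with `a`, then `b` commutes with `cfc g a`. -/
lemma commute_cfc_of_commute {a b : H →L[ℂ] H} (hb : Commute b a) (g : ℝ → ℝ) :
    Commute b (cfc g a) := by
  refine cfc_cases (fun x => Commute b x) a g (Commute.zero_right b) fun hg ha => ?_
  exact commute_cfcHom_of_commute ha hb _

/-- If `b` commutes with `a`, then `b` leaves every spectral subspace of `a` invariant. -/
lemma spectralSubspace_invariant {a b : H →L[ℂ] H} (hb : Commute b a) (S : Set ℝ) :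
    ∀ x ∈ spectralSubspace a S, b x ∈ spectralSubspace a S := by
  intro x hx
  rw [spectralSubspace, ← SetLike.mem_coe, Submodule.topologicalClosure_coe] at hx ⊢
  refine map_mem_closure b.continuous hx fun y hy => ?_
  rw [SetLike.mem_coe, Submodule.mem_iInf] at hy ⊢
  intro g
  rw [LinearMap.mem_ker]
  have hyg : cfc (g : ℝ → ℝ) a y = 0 := LinearMap.mem_ker.mp (hy g)
  calc cfc (g : ℝ → ℝ) a (b y) = (cfc (g : ℝ → ℝ) a * b) y := rfl
    _ = (b * cfc (g : ℝ → ℝ) a) y := by rw [(commute_cfc_of_commute hb (g : ℝ → ℝ)).eq]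
    _ = b (cfc (g : ℝ → ℝ) a y) := rfl
    _ = 0 := by rw [hyg, map_zero]

/-- If `b` and its adjoint both leave the closed subspace `K` invariant, then `b` commutes
with the orthogonal projection onto `K`. -/
lemma commute_orthogonalProjection_of_invariant {K : Submodule ℂ H} [CompleteSpace K]
    {b : H →L[ℂ] H} (h1 : ∀ x ∈ K, b x ∈ K)
    (h2 : ∀ x ∈ K, ContinuousLinearMap.adjoint b x ∈ K) :
    b * (K.subtypeL ∘L Submodule.orthogonalProjectionOnto K) = (K.subtypeL ∘L Submodule.orthogonalProjectionOnto K) * b := by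
  ext x
  show b ((Submodule.orthogonalProjectionOnto K x : H)) = (Submodule.orthogonalProjectionOnto K (b x) : H)
  have hdecomp : b x = b (Submodule.orthogonalProjectionOnto K x : H) + b (x - Submodule.orthogonalProjectionOnto K x) := by
    rw [← map_add]; congr 1; abel
  have hmem : b (Submodule.orthogonalProjectionOnto K x : H) ∈ K := h1 _ (Submodule.orthogonalProjectionOnto K x).2
  have hperp : b (x - Submodule.orthogonalProjectionOnto K x) ∈ Kᗮ := by
    rw [Submodule.mem_orthogonal]
    intro k hk
    have hmem' := Submodule.sub_starProjection_mem_orthogonal (K := K) x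
    rw [← ContinuousLinearMap.adjoint_inner_left]
    exact (Submodule.mem_orthogonal _ _).mp hmem' _ (h2 k hk)
  rw [hdecomp, map_add]
  have e1 : (Submodule.orthogonalProjectionOnto K (b (Submodule.orthogonalProjectionOnto K x : H)) : H)
      = b (Submodule.orthogonalProjectionOnto K x : H) := by
    exact congrArg _ (Submodule.orthogonalProjectionOnto_mem_subspace_eq_self (⟨_, hmem⟩ : K))
  have e2 : Submodule.orthogonalProjectionOnto K (b (x - Submodule.orthogonalProjectionOnto K x)) = 0 :=
    Submodule.orthogonalProjectionOnto_apply_of_mem_orthogonal hperp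
  rw [Submodule.coe_add, e1, e2, Submodule.coe_zero, add_zero]

lemma specProjIic_isSelfAdjoint (a : H →L[ℂ] H) (r : ℝ) : IsSelfAdjoint (specProjIic a r) :=
  isSelfAdjoint_starProjection _

lemma specProjIic_isIdempotentElem (a : H →L[ℂ] H) (r : ℝ) :
    IsIdempotentElem (specProjIic a r) := by
  rw [IsIdempotentElem]
  ext x
  show (Submodule.orthogonalProjectionOnto _ ((Submodule.orthogonalProjectionOnto _ x : H)) : H) = _
  exact congrArg _ (Submodule.orthogonalProjectionOnto_mem_subspace_eq_self (Submodule.orthogonalProjectionOnto _ x))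

end AuxLemmas

/-- For every `R ≥ 0` the set `B*_R` is reflexive: if `T ∈ B(H)` is such that
for all orthogonal projections `P, Q` in the von Neumann algebra `A''` generated by `A` one has
`(P S Q = 0 for every S ∈ B*_R) ⟹ P T Q = 0`, then `T ∈ B*_R`. -/
theorem propLE_reflexive
    (A : Set (H →L[ℂ] H)) (dom : Set (H →L[ℂ] H)) (L : (H →L[ℂ] H) → ℝ)
    (hAstar : ∀ a ∈ A, ContinuousLinearMap.adjoint a ∈ A)
    (hdom : ∀ a ∈ dom, IsSelfAdjoint a ∧ ∃ b ∈ A, ∃ c : ℂ, a = b + c • (1 : H →L[ℂ] H))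
    (R : ℝ) (hR : 0 ≤ R) (T : H →L[ℂ] H)
    (hT : ∀ P Q : H →L[ℂ] H,
      P ∈ setCommutant (setCommutant A) → Q ∈ setCommutant (setCommutant A) →
      IsSelfAdjoint P → IsIdempotentElem P → IsSelfAdjoint Q → IsIdempotentElem Q →
      (∀ S : H →L[ℂ] H, HasSpecPropLE dom L S R → P * S * Q = 0) → P * T * Q = 0) :
    HasSpecPropLE dom L T R := by
  intro a hadom hsa hLa
  obtain ⟨-, b0, hb0A, c, hac⟩ := hdom a hadom
  have hcomm : ∀ b ∈ setCommutant A, Commute b a := by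
    intro b hb
    have h1 : b0 * b = b * b0 := hb b0 hb0A
    show b * a = a * b
    simp [hac, mul_add, add_mul, h1, mul_smul_comm, smul_mul_assoc]
  have hstar : ∀ b ∈ setCommutant A, ContinuousLinearMap.adjoint b ∈ setCommutant A := by
    intro b hb s hs
    have h := hb (ContinuousLinearMap.adjoint s) (hAstar s hs)
    rw [← ContinuousLinearMap.star_eq_adjoint] at h ⊢
    calc s * star b = star (b * star s) := by rw [star_mul, star_star]
      _ = star (star s * b) := by rw [h]
      _ = star b * s := by rw [star_mul, star_star]
  have hPmem : ∀ r : ℝ, specProjIic a r ∈ setCommutant (setCommutant A) := by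
    intro r b hb
    exact commute_orthogonalProjection_of_invariant
      (spectralSubspace_invariant (hcomm b hb) _)
      (spectralSubspace_invariant (hcomm _ (hstar b hb)) _)
  have hQmem : specProjIoi a R ∈ setCommutant (setCommutant A) := by
    intro b hb
    have := hPmem R b hb
    rw [specProjIoi, mul_sub, sub_mul, mul_one, one_mul, this]
  have hQsa : IsSelfAdjoint (specProjIoi a R) := by
    rw [specProjIoi]
    exact (IsSelfAdjoint.one (H →L[ℂ] H)).sub (specProjIic_isSelfAdjoint a R)
  have hQidem : IsIdempotentElem (specProjIoi a R) :=
    (specProjIic_isIdempotentElem a R).one_sub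
  exact hT (specProjIic a 0) (specProjIoi a R) (hPmem 0) hQmem
    (specProjIic_isSelfAdjoint a 0) (specProjIic_isIdempotentElem a 0) hQsa hQidem
    (fun S hS => hS a hadom hsa hLa)
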